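/- For every real u > 0 with u ≠ 1, one has f(1/u) = -u · f(u). -/

import Mathlib

set_option maxHeartbeats 4000000
set_option maxRecDepth 100000

/-- The modified logarithm `𝓛ₘ(u)`. -/
noncomputable def modifiedLog (m : ℕ) (u : ℝ) : ℝ :=
  (-1) ^ m * (u - 1) ^ (-(m + 1 : ℤ)) *
    (Real.log u - ∑ j ∈ Finset.Icc 1 m, (-1) ^ (j + 1) * (u - 1) ^ j / j)

/-- The function `f(u) = (1/6)u^(-1/2) - 1/3 + 𝓛₁(u) - 2(1+u^(1/2))𝓛₂(u) + (1+u^(1/2))²𝓛₃(u)`. -/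
noncomputable def fCT (u : ℝ) : ℝ :=
  (1 / 6) * u ^ (-(1 : ℝ) / 2) - 1 / 3 + modifiedLog 1 u
    - 2 * (1 + u ^ ((1 : ℝ) / 2)) * modifiedLog 2 u
    + (1 + u ^ ((1 : ℝ) / 2)) ^ 2 * modifiedLog 3 u

private lemma S1 (x : ℝ) : (∑ j ∈ Finset.Icc (1:ℕ) 1, (-1 : ℝ) ^ (j + 1) * x ^ j / (j:ℝ)) = x := by
  rw [Finset.Icc_self, Finset.sum_singleton]; norm_num

private lemma S2 (x : ℝ) : (∑ j ∈ Finset.Icc (1:ℕ) 2, (-1 : ℝ) ^ (j + 1) * x ^ j / (j:ℝ))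
    = x - x ^ 2 / 2 := by
  rw [show (2:ℕ) = 1 + 1 from rfl, Finset.sum_Icc_succ_top (by norm_num), S1]
  norm_num; ring

private lemma S3 (x : ℝ) : (∑ j ∈ Finset.Icc (1:ℕ) 3, (-1 : ℝ) ^ (j + 1) * x ^ j / (j:ℝ))
    = x - x ^ 2 / 2 + x ^ 3 / 3 := by
  rw [show (3:ℕ) = 2 + 1 from rfl, Finset.sum_Icc_succ_top (by norm_num), S2]
  norm_num

private lemma modifiedLog_eq (m : ℕ) (u : ℝ) :
    modifiedLog m u = (-1) ^ m *
      (Real.log u - ∑ j ∈ Finset.Icc 1 m, (-1) ^ (j + 1) * (u - 1) ^ j / j) / (u - 1) ^ (m + 1) := by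
  rw [modifiedLog, show (-(m + 1 : ℤ)) = -((m + 1 : ℕ) : ℤ) by push_cast; ring,
    zpow_neg, zpow_natCast, div_eq_mul_inv, mul_assoc, mul_comm ((u-1)^(m+1))⁻¹, ← mul_assoc]

/-- The functional equation `f(1/u) = -u·f(u)` for `u > 0`, `u ≠ 1`. -/
theorem fCT_functional_equation (u : ℝ) (hu : 0 < u) (hu1 : u ≠ 1) :
    fCT (1 / u) = -u * fCT u := by
  set s := u ^ ((1 : ℝ) / 2) with hs
  have hspos : 0 < s := Real.rpow_pos_of_pos hu _
  have hs2 : s * s = u := by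
    rw [hs, ← Real.rpow_add hu]; norm_num
  have h3 : u ^ (-(1 : ℝ) / 2) = 1 / s := by
    refine eq_one_div_of_mul_eq_one_right ?_
    rw [hs, ← Real.rpow_add hu]; norm_num
  have h1 : (1 / u) ^ ((1 : ℝ) / 2) = 1 / s := by
    rw [one_div, Real.inv_rpow hu.le, ← hs, one_div]
  have h2 : (1 / u) ^ (-(1 : ℝ) / 2) = s := by
    rw [one_div, Real.inv_rpow hu.le, h3, one_div, inv_inv]
  have hlog : Real.log (1 / u) = -Real.log u := by
    rw [one_div, Real.log_inv]
  have hsne : s ≠ 0 := hspos.ne'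
  have hune : u ≠ 0 := hu.ne'
  have hum1 : u - 1 ≠ 0 := sub_ne_zero.mpr hu1
  have h1um1 : 1 / u - 1 ≠ 0 := by
    rw [div_sub_one hune]
    exact div_ne_zero (by simpa using sub_ne_zero.mpr (Ne.symm hu1)) hune
  simp only [fCT, modifiedLog_eq, h1, h2, h3, hlog, S1, S2, S3, ← hs]
  set ℓ := Real.log u with hℓ
  clear_value s ℓ
  rw [← hs2] at hum1 h1um1 ⊢
  have hA : s ^ 2 - 1 ≠ 0 := by rw [sq]; exact hum1
  have hB : (1 : ℝ) - s ^ 2 ≠ 0 := fun h => hA (by linarith)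
  have hC : (-1 : ℝ) + s ^ 2 ≠ 0 := fun h => hA (by linarith)
  rw [show (1:ℝ)/(s*s) - 1 = (1 - s^2)/s^2 by field_simp]
  simp only [div_pow, inv_div, one_div]
  field_simp
  ring
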